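/- Let V be a vector space over ℂ, D : V → V linear, n a positive integer, J ∈ ℂ with J ≠ 0, and λ ∈ ℂ. Suppose (φ_l)_{l≥0} in V (with φ_{−1} := 0) satisfies the decoupled recurrence for all l ≥ 1. Then for every l ≥ 0, 4ˡ · l! · (n/(2J))ˡ · (λ + 3/2)_l · φ_l = p_l((n/(2J))·D²) φ_0, where p_l((n/(2J))·D²) denotes the evaluation of the polynomial p_l at the linear operator (n/(2J))·D², applied to φ_0. -/
import Mathlib


/-- Pochhammer symbol `(a)_l = a(a+1)⋯(a+l-1)`, with `(a)_0 = 1`. -/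
noncomputable def cpoch (a : ℂ) (l : ℕ) : ℂ := ∏ i ∈ Finset.range l, (a + i)

/-- The decoupled recurrence: for every `l ≥ 1`,
`2l(2λ+2l+1)·φ_l = (D² + ((2λ+2l−1)(n+2l−2)/(2n))·J + (2l(2λ+n+2l−1)/(2n))·J)·φ_{l−1}
  − ((2λ+n+2l−3)(n+2l−2)/(4n²))·J²·φ_{l−2}`, with `φ_{−1} := 0`. -/
def DecoupledRec {V : Type*} [AddCommGroup V] [Module ℂ V] (D : V →ₗ[ℂ] V)
    (n : ℕ) (J lam : ℂ) (φ : ℕ → V) : Prop :=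
  ∀ l : ℕ, 1 ≤ l →
    (2 * (l : ℂ) * (2 * lam + 2 * (l : ℂ) + 1)) • φ l
      = D (D (φ (l - 1)))
        + ((2 * lam + 2 * (l : ℂ) - 1) * ((n : ℂ) + 2 * (l : ℂ) - 2) / (2 * (n : ℂ)) * J
            + 2 * (l : ℂ) * (2 * lam + (n : ℂ) + 2 * (l : ℂ) - 1) / (2 * (n : ℂ)) * J)
            • φ (l - 1)
        - ((2 * lam + (n : ℂ) + 2 * (l : ℂ) - 3) * ((n : ℂ) + 2 * (l : ℂ) - 2)
            / (4 * (n : ℂ) ^ 2) * J ^ 2) • (if 2 ≤ l then φ (l - 2) else 0)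

/-- First-order coefficient polynomial of the recurrence defining the solution polynomials. -/
noncomputable def coeffA (n : ℕ) (lam : ℂ) (l : ℕ) : Polynomial ℂ :=
  Polynomial.X + Polynomial.C ((lam + (l : ℂ) - 1 / 2) * ((l : ℂ) + (n : ℂ) / 2 - 1)
    + (l : ℂ) * (lam + (l : ℂ) + (n : ℂ) / 2 - 1 / 2))

/-- Zeroth-order coefficient of the recurrence defining the solution polynomials. -/
noncomputable def coeffB (n : ℕ) (lam : ℂ) (l : ℕ) : ℂ :=
  ((l : ℂ) - 1) * ((l : ℂ) + (n : ℂ) / 2 - 1) * ((l : ℂ) + lam - 1 / 2)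
    * ((l : ℂ) + lam + (n : ℂ) / 2 - 3 / 2)

/-- The solution polynomials `p_l`, defined by `p_{−1} := 0`, `p_0 := 1` and
`p_l(y) = (y + (λ+l−1/2)(l+n/2−1) + l(λ+l+n/2−1/2))·p_{l−1}(y)
          − (l−1)(l+n/2−1)(l+λ−1/2)(l+λ+n/2−3/2)·p_{l−2}(y)` for `l ≥ 1`. -/
noncomputable def solPoly (n : ℕ) (lam : ℂ) : ℕ → Polynomial ℂ
  | 0 => 1
  | 1 => coeffA n lam 1
  | (l + 2) => coeffA n lam (l + 2) * solPoly n lam (l + 1)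
      - Polynomial.C (coeffB n lam (l + 2)) * solPoly n lam l

private lemma aux_ea (n m : ℕ) (J lam t : ℂ) (hn : (n:ℂ) ≠ 0) (hJ : J ≠ 0) :
    (n:ℂ) / (2 * J) * t * ((2 * lam + 2 * (m : ℂ) - 1) * ((n : ℂ) + 2 * (m : ℂ) - 2) / (2 * (n : ℂ)) * J
        + 2 * (m : ℂ) * (2 * lam + (n : ℂ) + 2 * (m : ℂ) - 1) / (2 * (n : ℂ)) * J)
      = ((lam + (m : ℂ) - 1 / 2) * ((m : ℂ) + (n : ℂ) / 2 - 1)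
          + (m : ℂ) * (lam + (m : ℂ) + (n : ℂ) / 2 - 1 / 2)) * t := by
  field_simp
  ring

private lemma aux_eb (n : ℕ) (J lam t : ℂ) (l : ℕ) (hn : (n:ℂ) ≠ 0) (hJ : J ≠ 0) :
    (n:ℂ) / (2 * J) * ((n:ℂ) / (2 * J) * (2 * ((l:ℂ) + 1) * (2 * lam + 2 * ((l:ℂ) + 1) + 1)) * t)
        * ((2 * lam + (n : ℂ) + 2 * ((l + 2 : ℕ) : ℂ) - 3) * ((n : ℂ) + 2 * ((l + 2 : ℕ) : ℂ) - 2)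
            / (4 * (n : ℂ) ^ 2) * J ^ 2)
      = coeffB n lam (l + 2) * t := by
  rw [coeffB]
  push_cast
  field_simp
  ring

/-- Solution operators of the decoupled recurrence:
`4ˡ l! (n/(2J))ˡ (λ+3/2)_l · φ_l = p_l((n/(2J))·D²) φ_0`. -/
theorem stmt12 {V : Type*} [AddCommGroup V] [Module ℂ V] (D : V →ₗ[ℂ] V)
    (n : ℕ) (hn : 0 < n) (J : ℂ) (hJ : J ≠ 0) (lam : ℂ) (φ : ℕ → V)
    (h : DecoupledRec D n J lam φ) :
    ∀ l : ℕ,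
      ((4 : ℂ) ^ l * (l.factorial : ℂ) * ((n : ℂ) / (2 * J)) ^ l * cpoch (lam + 3 / 2) l) • φ l
        = (Polynomial.aeval ((((n : ℂ) / (2 * J)) • (D ∘ₗ D) : Module.End ℂ V))
            (solPoly n lam l)) (φ 0) := by
  have hn' : (n : ℂ) ≠ 0 := Nat.cast_ne_zero.mpr hn.ne'
  set c : ℂ := (n : ℂ) / (2 * J) with hc
  set E : Module.End ℂ V := c • (D ∘ₗ D : Module.End ℂ V) with hE
  set s : ℕ → ℂ := fun l => (4:ℂ)^l * l.factorial * c^l * cpoch (lam + 3/2) l with hs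
  have hsrec : ∀ l : ℕ, s (l+1) = c * (2*((l:ℂ)+1)*(2*lam+2*((l:ℂ)+1)+1)) * s l := by
    intro l
    have hp : cpoch (lam + 3/2) (l+1) = cpoch (lam + 3/2) l * (lam + 3/2 + l) :=
      Finset.prod_range_succ _ _
    simp only [hs, hp, pow_succ, Nat.factorial_succ, Nat.cast_mul, Nat.cast_add, Nat.cast_one]
    ring
  have hEap : ∀ (a : ℂ) (v : V), E (a • v) = (c * a) • D (D v) := by
    intro a v
    simp [hE, smul_smul, mul_comm]
  have haeval : ∀ (m : ℕ) (p : Polynomial ℂ) (v : V),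
      (Polynomial.aeval E) (coeffA n lam m * p) v
        = E ((Polynomial.aeval E) p v)
          + ((lam + (m : ℂ) - 1 / 2) * ((m : ℂ) + (n : ℂ) / 2 - 1)
              + (m : ℂ) * (lam + (m : ℂ) + (n : ℂ) / 2 - 1 / 2))
            • ((Polynomial.aeval E) p v) := by
    intro m p v
    rw [map_mul, coeffA, map_add, Polynomial.aeval_X, Polynomial.aeval_C,
      Module.End.mul_apply, LinearMap.add_apply, Module.algebraMap_end_apply]
  suffices H : ∀ l, (s l • φ l = (Polynomial.aeval E) (solPoly n lam l) (φ 0)) ∧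
      (s (l+1) • φ (l+1) = (Polynomial.aeval E) (solPoly n lam (l+1)) (φ 0)) by
    intro l; exact (H l).1
  clear_value c E s
  intro l
  induction l with
  | zero =>
    constructor
    · simp [hs, cpoch, solPoly]
    · have h1 := h 1 le_rfl
      rw [if_neg (by omega)] at h1
      have h3 := congrArg (fun v => c • v) h1
      simp only [smul_add, smul_sub, smul_zero, smul_smul, sub_zero] at h3
      have hg : (Polynomial.aeval E) (solPoly n lam 1) (φ 0)
          = E (φ 0)
            + ((lam + ((1:ℕ) : ℂ) - 1 / 2) * (((1:ℕ) : ℂ) + (n : ℂ) / 2 - 1)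
                + ((1:ℕ) : ℂ) * (lam + ((1:ℕ) : ℂ) + (n : ℂ) / 2 - 1 / 2)) • (φ 0) := by
        rw [show solPoly n lam 1 = coeffA n lam 1 * 1 from (mul_one _).symm, haeval]
        simp
      rw [hg]
      have hEv : E (φ 0) = c • D (D (φ 0)) := by simp [hE]
      rw [hEv]
      have hs1 : s 1 = c * (2 * ((1:ℕ) : ℂ) * (2*lam + 2*((1:ℕ) : ℂ) + 1)) := by
        have := hsrec 0
        simp only [Nat.cast_zero] at this
        rw [this]
        norm_num [hs, cpoch]
      rw [hs1]
      have ea : c * ((2 * lam + 2 * ((1:ℕ) : ℂ) - 1) * ((n : ℂ) + 2 * ((1:ℕ) : ℂ) - 2) / (2 * (n : ℂ)) * J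
            + 2 * ((1:ℕ) : ℂ) * (2 * lam + (n : ℂ) + 2 * ((1:ℕ) : ℂ) - 1) / (2 * (n : ℂ)) * J)
          = ((lam + ((1:ℕ) : ℂ) - 1 / 2) * (((1:ℕ) : ℂ) + (n : ℂ) / 2 - 1)
              + ((1:ℕ) : ℂ) * (lam + ((1:ℕ) : ℂ) + (n : ℂ) / 2 - 1 / 2)) := by
        rw [hc]
        have := aux_ea n 1 J lam 1 hn' hJ
        simpa using this
      rw [← ea]
      exact h3
  | succ l ih =>
    obtain ⟨ih0, ih1⟩ := ih
    refine ⟨ih1, ?_⟩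
    have h2 := h (l+2) (by omega)
    rw [if_pos (by omega)] at h2
    have hl1 : l + 2 - 1 = l + 1 := by omega
    have hl2 : l + 2 - 2 = l := by omega
    rw [hl1, hl2] at h2
    have h3 := congrArg (fun v => (c * s (l+1)) • v) h2
    simp only [smul_add, smul_sub, smul_smul] at h3
    have hg : (Polynomial.aeval E) (solPoly n lam (l+2)) (φ 0)
        = E ((Polynomial.aeval E) (solPoly n lam (l+1)) (φ 0))
          + ((lam + ((l+2 : ℕ) : ℂ) - 1 / 2) * (((l+2 : ℕ) : ℂ) + (n : ℂ) / 2 - 1)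
              + ((l+2 : ℕ) : ℂ) * (lam + ((l+2 : ℕ) : ℂ) + (n : ℂ) / 2 - 1 / 2))
            • ((Polynomial.aeval E) (solPoly n lam (l+1)) (φ 0))
          - coeffB n lam (l+2) • ((Polynomial.aeval E) (solPoly n lam l) (φ 0)) := by
      rw [show solPoly n lam (l+2) = coeffA n lam (l+2) * solPoly n lam (l+1)
          - Polynomial.C (coeffB n lam (l+2)) * solPoly n lam l from rfl]
      rw [map_sub, LinearMap.sub_apply, haeval, map_mul, Polynomial.aeval_C,
        Module.End.mul_apply, Module.algebraMap_end_apply]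
    rw [hg, ← ih0, ← ih1, hEap, smul_smul, smul_smul]
    have hscal : s (l+2) = c * s (l+1) * (2 * ((l+2 : ℕ) : ℂ) * (2*lam + 2*((l+2 : ℕ) : ℂ) + 1)) := by
      have := hsrec (l+1)
      push_cast at this ⊢
      rw [this]; ring
    rw [hscal]
    have ea : c * s (l+1) * ((2 * lam + 2 * ((l+2 : ℕ) : ℂ) - 1) * ((n : ℂ) + 2 * ((l+2 : ℕ) : ℂ) - 2) / (2 * (n : ℂ)) * J
            + 2 * ((l+2 : ℕ) : ℂ) * (2 * lam + (n : ℂ) + 2 * ((l+2 : ℕ) : ℂ) - 1) / (2 * (n : ℂ)) * J)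
          = ((lam + ((l+2 : ℕ) : ℂ) - 1 / 2) * (((l+2 : ℕ) : ℂ) + (n : ℂ) / 2 - 1)
              + ((l+2 : ℕ) : ℂ) * (lam + ((l+2 : ℕ) : ℂ) + (n : ℂ) / 2 - 1 / 2)) * s (l+1) := by
      rw [hc]
      exact aux_ea n (l+2) J lam (s (l+1)) hn' hJ
    have eb : c * s (l+1) * ((2 * lam + (n : ℂ) + 2 * ((l+2 : ℕ) : ℂ) - 3) * ((n : ℂ) + 2 * ((l+2 : ℕ) : ℂ) - 2)
            / (4 * (n : ℂ) ^ 2) * J ^ 2)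
          = coeffB n lam (l+2) * s l := by
      rw [hsrec l, hc]
      exact aux_eb n J lam (s l) l hn' hJ
    rw [← ea, ← eb]
    exact h3
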